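/- The exterior differential and the boundary operator are adjoint: for every (p-1)-form f and every p-form g on V, ⟨df, g⟩ = ⟨f, ∂g⟩. -/
import Mathlib

/-- The exterior differential: maps forms on paths of `n` vertices to forms on
paths of `n+1` vertices, `(df)(i₀⋯i_n) = Σ_q (−1)^q f(i₀⋯ î_q ⋯ i_n)`. -/
def dOp {V : Type*} {n : ℕ} (f : (Fin n → V) → ℝ) : (Fin (n + 1) → V) → ℝ :=
  fun x => ∑ q : Fin (n + 1), (-1 : ℝ) ^ (q : ℕ) * f (x ∘ q.succAbove)

/-- The boundary operator: maps forms on paths of `n+1` vertices to forms on paths of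
`n` vertices, `(∂f)(i₀⋯i_{q−1}) = Σ_{k∈V} Σ_q (−1)^q f(i₀⋯ i_{q−1} k i_q ⋯ i_{n−1})`;
it is taken to be `0` on 0-forms (forms on single vertices). -/
def bd {V : Type*} [Fintype V] : {n : ℕ} → ((Fin (n + 1) → V) → ℝ) → ((Fin n → V) → ℝ)
  | 0, _ => 0
  | (m + 1), f => fun y => ∑ k : V, ∑ q : Fin (m + 2), (-1 : ℝ) ^ (q : ℕ) * f (q.insertNth k y)

/-- The Laplacian `Δ = d∂ + ∂d` on forms on paths of `p+1` vertices (p-forms). -/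
def lap {V : Type*} [Fintype V] {p : ℕ} (f : (Fin (p + 1) → V) → ℝ) :
    (Fin (p + 1) → V) → ℝ :=
  dOp (bd f) + bd (dOp f)

/-- The inner product `⟨f,g⟩ = Σ_x f(x) g(x)` over all elementary paths. -/
def pinner {V : Type*} [Fintype V] {n : ℕ} (f g : (Fin n → V) → ℝ) : ℝ :=
  ∑ x : Fin n → V, f x * g x

/-- `d` and `∂` are adjoint: `⟨df, g⟩ = ⟨f, ∂g⟩`. -/
theorem d_adjoint_bd {V : Type*} [Fintype V] (p : ℕ)
    (f : (Fin (p + 1) → V) → ℝ) (g : (Fin (p + 2) → V) → ℝ) :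
    pinner (dOp f) g = pinner f (bd g) := by
  have key : ∀ q : Fin (p + 2),
      (∑ x : Fin (p + 2) → V, (-1 : ℝ) ^ (q : ℕ) * f (x ∘ q.succAbove) * g x)
      = ∑ k : V, ∑ y : Fin (p + 1) → V,
          (-1 : ℝ) ^ (q : ℕ) * f y * g (q.insertNth k y) := by
    intro q
    calc (∑ x : Fin (p + 2) → V, (-1 : ℝ) ^ (q : ℕ) * f (x ∘ q.succAbove) * g x)
        = ∑ z : V × (Fin (p + 1) → V),
            (-1 : ℝ) ^ (q : ℕ) * f ((Fin.insertNthEquiv (fun _ => V) q) z ∘ q.succAbove)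
              * g ((Fin.insertNthEquiv (fun _ => V) q) z) :=
          (Equiv.sum_comp (Fin.insertNthEquiv (fun _ => V) q)
            (fun x => (-1 : ℝ) ^ (q : ℕ) * f (x ∘ q.succAbove) * g x)).symm
      _ = ∑ z : V × (Fin (p + 1) → V),
            (-1 : ℝ) ^ (q : ℕ) * f z.2 * g (q.insertNth z.1 z.2) := by
          refine Finset.sum_congr rfl fun z _ => ?_
          have h2 : (q.insertNth z.1 z.2) ∘ q.succAbove = z.2 :=
            by ext i; simp [Function.comp]
          simp [Fin.insertNthEquiv, h2]
      _ = ∑ k : V, ∑ y : Fin (p + 1) → V,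
            (-1 : ℝ) ^ (q : ℕ) * f y * g (q.insertNth k y) :=
          Fintype.sum_prod_type'
            (fun (k : V) (y : Fin (p + 1) → V) =>
              (-1 : ℝ) ^ (q : ℕ) * f y * g (q.insertNth k y))
  calc pinner (dOp f) g
      = ∑ x : Fin (p + 2) → V, ∑ q : Fin (p + 2),
          (-1 : ℝ) ^ (q : ℕ) * f (x ∘ q.succAbove) * g x := by
        simp [pinner, dOp, Finset.sum_mul]
    _ = ∑ q : Fin (p + 2), ∑ x : Fin (p + 2) → V,
          (-1 : ℝ) ^ (q : ℕ) * f (x ∘ q.succAbove) * g x := Finset.sum_comm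
    _ = ∑ q : Fin (p + 2), ∑ k : V, ∑ y : Fin (p + 1) → V,
          (-1 : ℝ) ^ (q : ℕ) * f y * g (q.insertNth k y) := by
        exact Finset.sum_congr rfl fun q _ => key q
    _ = ∑ k : V, ∑ q : Fin (p + 2), ∑ y : Fin (p + 1) → V,
          (-1 : ℝ) ^ (q : ℕ) * f y * g (q.insertNth k y) := Finset.sum_comm
    _ = ∑ k : V, ∑ y : Fin (p + 1) → V, ∑ q : Fin (p + 2),
          (-1 : ℝ) ^ (q : ℕ) * f y * g (q.insertNth k y) :=
        Finset.sum_congr rfl fun _ _ => Finset.sum_comm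
    _ = ∑ y : Fin (p + 1) → V, ∑ k : V, ∑ q : Fin (p + 2),
          (-1 : ℝ) ^ (q : ℕ) * f y * g (q.insertNth k y) := Finset.sum_comm
    _ = pinner f (bd g) := by
        simp only [pinner, bd, Finset.mul_sum]
        exact Finset.sum_congr rfl fun y _ => Finset.sum_congr rfl fun k _ =>
          Finset.sum_congr rfl fun q _ => by ring
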